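/- Let p be a prime, F = 𝔽_p((T)) the field of formal Laurent series over the field with p elements, endowed with its valuation topology, and let G = Fˣ be its unit group, a topological group. Let k be an algebraically closed field of characteristic p. Then there exist a smooth representation V of G over k which is admissible and a G-stable subspace W of V such that the quotient representation V/W is not admissible. -/

import Mathlib

section Defs

variable {k : Type*} [Field k] {G : Type*} [Group G] [TopologicalSpace G]
variable {V : Type*} [AddCommGroup V] [Module k V]

/-- A representation of a topological group is smooth if the stabilizer of every
vector is an open subset. -/
def IsSmoothRep (ρ : Representation k G V) : Prop :=
  ∀ v : V, IsOpen {g : G | ρ g v = v}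

/-- The subspace of vectors fixed by every element of a subset `S` of `G`. -/
def fixedBy (ρ : Representation k G V) (S : Set G) : Submodule k V where
  carrier := {v : V | ∀ g ∈ S, ρ g v = v}
  add_mem' := by intro a b ha hb g hg; simp [map_add, ha g hg, hb g hg]
  zero_mem' := by intro g hg; simp
  smul_mem' := by intro c a ha g hg; simp [ha g hg]

/-- A subspace is `G`-stable if it is preserved by the action. -/
def IsStableRep (ρ : Representation k G V) (W : Submodule k V) : Prop :=
  ∀ g : G, ∀ v ∈ W, ρ g v ∈ W

/-- A representation is irreducible if it is nonzero and its only `G`-stable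
subspaces are `⊥` and `⊤`. -/
def IsIrreducibleRep (ρ : Representation k G V) : Prop :=
  (∃ v : V, v ≠ 0) ∧ ∀ W : Submodule k V, IsStableRep ρ W → W = ⊥ ∨ W = ⊤

/-- A representation is admissible if it is smooth and its fixed vectors under every
open subgroup form a finite-dimensional space. -/
def IsAdmissibleRep (ρ : Representation k G V) : Prop :=
  IsSmoothRep ρ ∧
    ∀ J : Subgroup G, IsOpen (J : Set G) → FiniteDimensional k ↥(fixedBy ρ (J : Set G))

/-- A (profinite) topological group is pro-`p` if every open normal subgroup has
index a power of `p`. -/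
def IsProP (p : ℕ) (G : Type*) [Group G] [TopologicalSpace G] : Prop :=
  ∀ N : Subgroup G, N.Normal → IsOpen (N : Set G) → ∃ n : ℕ, N.index = p ^ n

end Defs

/-- The representation induced on the quotient `V ⧸ W` by a stable subspace `W`. -/
def quotRep {k : Type*} [Field k] {G : Type*} [Group G]
    {V : Type*} [AddCommGroup V] [Module k V]
    (ρ : Representation k G V) (W : Submodule k V) (h : IsStableRep ρ W) :
    Representation k G (V ⧸ W) where
  toFun g := Submodule.mapQ W W (ρ g) (fun v hv => h g v hv)
  map_one' := by
    apply LinearMap.ext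
    intro x
    obtain ⟨v, rfl⟩ := Submodule.Quotient.mk_surjective W x
    simp [Submodule.mapQ_apply]
  map_mul' := by
    intro g₁ g₂
    apply LinearMap.ext
    intro x
    obtain ⟨v, rfl⟩ := Submodule.Quotient.mk_surjective W x
    simp [Submodule.mapQ_apply]

/- ===== Auxiliary constructions for statement11 ===== -/

open LaurentSeries HahnSeries Multiplicative WithZero PowerSeries

namespace Stmt11Aux

noncomputable section

lemma zm0_lt_iff (x : ℤᵐ⁰) (a : ℤ) :
    x < ((ofAdd a : Multiplicative ℤ) : ℤᵐ⁰) ↔ x ≤ ((ofAdd (a-1) : Multiplicative ℤ) : ℤᵐ⁰) := by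
  induction x using WithZero.recZeroCoe with
  | zero => simp [WithZero.zero_lt_coe, WithZero.zero_le]
  | coe m =>
    rw [WithZero.coe_lt_coe, WithZero.coe_le_coe]
    constructor
    · intro h
      have := Multiplicative.toAdd_lt.mpr h
      simp only [toAdd_ofAdd] at this
      exact Multiplicative.toAdd_le.mp (by simp only [toAdd_ofAdd]; omega)
    · intro h
      have := Multiplicative.toAdd_le.mpr h
      simp only [toAdd_ofAdd] at this
      exact Multiplicative.toAdd_lt.mp (by simp only [toAdd_ofAdd]; omega)

lemma exists_nat_lt_unit (γ : ℤᵐ⁰ˣ) :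
    ∃ N : ℕ, ((ofAdd (-(N+1) : ℤ) : Multiplicative ℤ) : ℤᵐ⁰) < γ := by
  obtain ⟨m, hm⟩ := WithZero.ne_zero_iff_exists.mp γ.ne_zero
  refine ⟨(toAdd m).natAbs, ?_⟩
  rw [← hm, WithZero.coe_lt_coe]
  have : -((((toAdd m).natAbs : ℕ) : ℤ) + 1) < toAdd m := by omega
  exact Multiplicative.toAdd_lt.mp (by simpa using this)

lemma ofAdd_anti {N M : ℕ} (h : N ≤ M) :
    ((ofAdd (-(M+1) : ℤ) : Multiplicative ℤ) : ℤᵐ⁰)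
      ≤ ((ofAdd (-(N+1) : ℤ) : Multiplicative ℤ) : ℤᵐ⁰) := by
  rw [WithZero.coe_le_coe]
  exact Multiplicative.toAdd_le.mp (by simp; omega)

variable (p : ℕ) [Fact p.Prime]

local notation "F" => LaurentSeries (ZMod p)
local notation "G" => (LaurentSeries (ZMod p))ˣ

lemma v_coe_one {g : G} (h : Valued.v ((g : F) - 1) < 1) : Valued.v (g : F) = 1 := by
  have h2 : (g : F) = 1 + ((g : F) - 1) := by ring
  rw [h2]
  exact Valuation.map_one_add_of_lt _ h

lemma v_inv_coe_one {g : G} (h : Valued.v ((g : F) - 1) < 1) :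
    Valued.v ((g⁻¹ : G) : F) = 1 := by
  have h1 : ((g : F)) * ((g⁻¹ : G) : F) = 1 := by
    rw [← Units.val_mul, mul_inv_cancel, Units.val_one]
  have := congrArg Valued.v h1
  rw [Valuation.map_mul, Valuation.map_one, v_coe_one p h, one_mul] at this
  exact this

lemma v_inv_sub_one {g : G} (h : Valued.v ((g : F) - 1) < 1) :
    Valued.v (((g⁻¹ : G) : F) - 1) = Valued.v ((g : F) - 1) := by
  have h1 : ((g⁻¹ : G) : F) - 1 = ((g⁻¹ : G) : F) * (1 - (g : F)) := by
    have : ((g⁻¹ : G) : F) * (g : F) = 1 := by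
      rw [← Units.val_mul, inv_mul_cancel, Units.val_one]
    rw [mul_sub, this, mul_one]
  rw [h1, Valuation.map_mul, v_inv_coe_one p h, one_mul, Valuation.map_sub_swap]

/-- The `N`-th unit subgroup `1 + T^(N+1) O`. -/
def UU (N : ℕ) : Subgroup G where
  carrier := {g : G | Valued.v ((g : F) - 1) ≤ ((ofAdd (-(N+1) : ℤ) : Multiplicative ℤ) : ℤᵐ⁰)}
  one_mem' := by simp
  mul_mem' := by
    intro a b ha hb
    simp only [Set.mem_setOf_eq] at ha hb ⊢
    have hb1 : Valued.v ((b : F) - 1) < 1 := lt_of_le_of_lt hb (by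
      rw [← WithZero.coe_one, WithZero.coe_lt_coe, ← ofAdd_zero, Multiplicative.ofAdd_lt]
      omega)
    have hab : ((a * b : G) : F) - 1 = ((a : F)) * ((b : F) - 1) + ((a : F) - 1) := by
      push_cast
      ring
    rw [hab]
    refine le_trans (Valuation.map_add _ _ _) (max_le ?_ ha)
    rw [Valuation.map_mul]
    have ha1 : Valued.v ((a : F) - 1) < 1 := lt_of_le_of_lt ha (by
      rw [← WithZero.coe_one, WithZero.coe_lt_coe, ← ofAdd_zero, Multiplicative.ofAdd_lt]
      omega)
    rw [v_coe_one p ha1, one_mul]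
    exact hb
  inv_mem' := by
    intro a ha
    simp only [Set.mem_setOf_eq] at ha ⊢
    have ha1 : Valued.v ((a : F) - 1) < 1 := lt_of_le_of_lt ha (by
      rw [← WithZero.coe_one, WithZero.coe_lt_coe, ← ofAdd_zero, Multiplicative.ofAdd_lt]
      omega)
    rw [v_inv_sub_one p ha1]
    exact ha

lemma mem_UU_iff {N : ℕ} {g : G} :
    g ∈ UU p N ↔ Valued.v ((g : F) - 1) ≤ ((ofAdd (-(N+1) : ℤ) : Multiplicative ℤ) : ℤᵐ⁰) :=
  Iff.rfl

lemma UU_coeff {N : ℕ} {g : G} (hg : g ∈ UU p N) :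
    ∀ n : ℤ, n < N + 1 → ((g : F) - 1).coeff n = 0 := by
  intro n hn
  exact (valuation_le_iff_coeff_lt_eq_zero (ZMod p)).mp (by exact_mod_cast hg) n hn

lemma UU_isOpen (N : ℕ) : IsOpen ((UU p N : Set G)) := by
  have hF : IsOpen {f : F | Valued.v (f - 1) ≤ ((ofAdd (-(N+1) : ℤ) : Multiplicative ℤ) : ℤᵐ⁰)} := by
    rw [isOpen_iff_mem_nhds]
    intro f hf
    rw [Valued.mem_nhds]
    refine ⟨Units.mk0 (Valued.v.restrict (HahnSeries.single (N : ℤ) (1 : ZMod p) : F))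
      (by simp [valuation_single_zpow]), ?_⟩
    intro y hy
    simp only [Set.mem_setOf_eq, Units.val_mk0] at hy ⊢
    rw [Valuation.restrict_lt_iff, valuation_single_zpow] at hy
    have hy' : Valued.v (y - f) ≤ ((ofAdd (-(N+1) : ℤ) : Multiplicative ℤ) : ℤᵐ⁰) := by
      have := (zm0_lt_iff _ (-(N:ℤ))).mp hy
      convert this using 3
      omega
    have : y - 1 = (y - f) + (f - 1) := by ring
    rw [this]
    exact le_trans (Valuation.map_add _ _ _) (max_le hy' hf)
  exact Units.continuous_val.isOpen_preimage _ hF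

lemma vlt_one_of_mem_UU {N : ℕ} {g : G} (hg : g ∈ UU p N) : Valued.v ((g : F) - 1) < 1 :=
  lt_of_le_of_lt hg (by
    rw [← WithZero.coe_one, WithZero.coe_lt_coe, ← ofAdd_zero, Multiplicative.ofAdd_lt]
    omega)

lemma exists_UU_le {J : Set G} (hJ : J ∈ nhds (1 : G)) : ∃ N : ℕ, (UU p N : Set G) ⊆ J := by
  have h1 : nhds (1 : G) = Filter.comap (Units.embedProduct F) (nhds (Units.embedProduct F 1)) :=
    Units.isInducing_embedProduct.nhds_eq_comap 1
  rw [h1] at hJ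
  obtain ⟨S, hS, hSJ⟩ := Filter.mem_comap.mp hJ
  rw [map_one, ← Prod.mk_one_one, nhds_prod_eq] at hS
  obtain ⟨A, hA, B, hB, hAB⟩ := Filter.mem_prod_iff.mp hS
  rw [← MulOpposite.op_one] at hB
  have hB' : MulOpposite.op ⁻¹' B ∈ nhds (1 : F) :=
    MulOpposite.continuous_op.continuousAt.preimage_mem_nhds hB
  obtain ⟨γ₁, h1'⟩ := Valued.mem_nhds.mp hA
  obtain ⟨γ₂, h2'⟩ := Valued.mem_nhds.mp hB'
  obtain ⟨N₁, hN₁⟩ := exists_nat_lt_unit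
    (Units.map (MonoidWithZeroHom.ValueGroup₀.embedding (f := .ofClass (Valued.v (R := F)))).toMonoidHom γ₁)
  obtain ⟨N₂, hN₂⟩ := exists_nat_lt_unit
    (Units.map (MonoidWithZeroHom.ValueGroup₀.embedding (f := .ofClass (Valued.v (R := F)))).toMonoidHom γ₂)
  refine ⟨max N₁ N₂, ?_⟩
  intro g hg
  have hg' : Valued.v ((g : F) - 1)
      ≤ ((ofAdd (-((max N₁ N₂ : ℕ) + 1) : ℤ) : Multiplicative ℤ) : ℤᵐ⁰) := hg
  have hgA : (g : F) ∈ A := h1' (by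
    rw [Set.mem_setOf_eq, Valuation.restrict_lt_iff_lt_embedding]
    exact lt_of_le_of_lt (le_trans hg' (ofAdd_anti (le_max_left N₁ N₂))) hN₁)
  have hvinv : Valued.v (((g⁻¹ : G) : F) - 1) = Valued.v ((g : F) - 1) :=
    v_inv_sub_one p (vlt_one_of_mem_UU p hg)
  have hgB : MulOpposite.op ((g⁻¹ : G) : F) ∈ B := h2' (by
    simp only [Set.mem_setOf_eq]
    rw [Valuation.restrict_lt_iff_lt_embedding, hvinv]
    exact lt_of_le_of_lt (le_trans hg' (ofAdd_anti (le_max_right N₁ N₂))) hN₂)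
  apply hSJ
  exact hAB (Set.mk_mem_prod hgA hgB)

/- ===== power series part, logarithmic derivative ===== -/

lemma psp_mul {x y : F} (hx : x ≠ 0) (hy : y ≠ 0) :
    (x * y).powerSeriesPart = x.powerSeriesPart * y.powerSeriesPart := by
  apply HahnSeries.ofPowerSeries_injective (Γ := ℤ)
  rw [map_mul, ofPowerSeries_powerSeriesPart, ofPowerSeries_powerSeriesPart,
    ofPowerSeries_powerSeriesPart, HahnSeries.order_mul hx hy]
  have h : (HahnSeries.single (-(x.order + y.order)) (1 : ZMod p) : F)
      = HahnSeries.single (-x.order) 1 * HahnSeries.single (-y.order) 1 := by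
    rw [HahnSeries.single_mul_single, one_mul, neg_add]
  rw [h]; ring

lemma psp_one : (1 : F).powerSeriesPart = 1 := by
  apply HahnSeries.ofPowerSeries_injective (Γ := ℤ)
  rw [map_one, ofPowerSeries_powerSeriesPart, HahnSeries.order_one, neg_zero, mul_one]
  rfl

/-- The power series part of a unit of the Laurent series field. -/
def U (g : G) : PowerSeries (ZMod p) := ((g : F)).powerSeriesPart

lemma U_mul (g h : G) : U p (g * h) = U p g * U p h := by
  have : ((g * h : G) : F) = (g : F) * (h : F) := rfl
  rw [U, this, psp_mul p (Units.ne_zero g) (Units.ne_zero h)]; rfl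

lemma U_mul_inv (g : G) : U p g * U p g⁻¹ = 1 := by
  rw [← U_mul, mul_inv_cancel, U, Units.val_one, psp_one]

/-- The logarithmic derivative. -/
def DD (g : G) : PowerSeries (ZMod p) := derivative (ZMod p) (U p g) * U p g⁻¹

lemma DD_mul (g h : G) : DD p (g * h) = DD p g + DD p h := by
  unfold DD
  rw [U_mul, mul_inv_rev, U_mul]
  rw [Derivation.leibniz]
  have h1 : U p g * U p g⁻¹ = 1 := U_mul_inv p g
  have h2 : U p h * U p h⁻¹ = 1 := U_mul_inv p h
  simp only [smul_eq_mul]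
  linear_combination (derivative (ZMod p) (U p h) * U p h⁻¹) * h1 +
    (derivative (ZMod p) (U p g) * U p g⁻¹) * h2

lemma DD_one : DD p 1 = 0 := by
  unfold DD
  rw [U, Units.val_one, psp_one, Derivation.map_one_eq_zero, zero_mul]

/- ===== coefficients ===== -/

lemma order_coe {g : G} (h : ∀ n : ℤ, n < 1 → ((g : F) - 1).coeff n = 0) :
    (g : F).order = 0 := by
  have hco : ∀ n : ℤ, n < 1 → (g : F).coeff n = (if n = 0 then 1 else 0) := by
    intro n hn
    have : (g : F).coeff n = ((g : F) - 1).coeff n + (1 : F).coeff n := by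
      rw [HahnSeries.coeff_sub]; ring
    rw [this, h n hn, HahnSeries.coeff_one, zero_add]
    split <;> rfl
  have h0 : (g : F).coeff 0 = 1 := by rw [hco 0 (by omega), if_pos rfl]
  have hne : (g : F) ≠ 0 := Units.ne_zero g
  refine le_antisymm (HahnSeries.order_le_of_coeff_ne_zero (by rw [h0]; exact one_ne_zero)) ?_
  by_contra hlt
  push_neg at hlt
  have : (g : F).coeff (g : F).order ≠ 0 := fun h0 => hne (HahnSeries.coeff_order_eq_zero.mp h0)
  rw [hco _ (by omega), if_neg (by omega)] at this
  exact this rfl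

lemma U_coeff {g : G} (h : ∀ n : ℤ, n < 1 → ((g : F) - 1).coeff n = 0) (l : ℕ) :
    PowerSeries.coeff l (U p g) = (g : F).coeff l := by
  rw [U, powerSeriesPart_coeff, order_coe p h, zero_add]

lemma coeff_DD_vanish {N : ℕ} {g : G}
    (h : ∀ n : ℤ, n < (N : ℤ) + 1 → ((g : F) - 1).coeff n = 0) {t : ℕ} (ht : t + 1 ≤ N) :
    PowerSeries.coeff t (DD p g) = 0 := by
  have h1 : ∀ n : ℤ, n < 1 → ((g : F) - 1).coeff n = 0 := fun n hn => h n (by omega)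
  rw [DD, PowerSeries.coeff_mul]
  apply Finset.sum_eq_zero
  intro ab hab
  rw [Finset.HasAntidiagonal.mem_antidiagonal] at hab
  have ha : ab.1 ≤ t := by omega
  have : PowerSeries.coeff ab.1 (derivative (ZMod p) (U p g)) = 0 := by
    rw [PowerSeries.coeff_derivative, U_coeff p h1]
    have hc : ((g : F) - 1).coeff ((ab.1 + 1 : ℕ) : ℤ) = 0 := h _ (by push_cast; omega)
    have : (g : F).coeff ((ab.1 + 1 : ℕ) : ℤ) = 0 := by
      have e : (g : F).coeff ((ab.1+1 : ℕ) : ℤ)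
          = ((g : F) - 1).coeff ((ab.1+1 : ℕ) : ℤ) + (1 : F).coeff ((ab.1+1 : ℕ) : ℤ) := by
        rw [HahnSeries.coeff_sub]; ring
      rw [e, hc, HahnSeries.coeff_one, if_neg (by push_cast; omega), add_zero]
    rw [this, zero_mul]
  rw [this, zero_mul]

/- ===== the units 1 + T^(i p + 1) ===== -/

lemma em_ne (i : ℕ) : (1 + HahnSeries.single ((i*p+1 : ℕ) : ℤ) (1 : ZMod p) : F) ≠ 0 := by
  intro hc
  have h2 : (1 + HahnSeries.single ((i*p+1 : ℕ) : ℤ) (1 : ZMod p) : F).coeff 0 = 1 := by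
    rw [HahnSeries.coeff_add, HahnSeries.coeff_one, if_pos rfl,
      HahnSeries.coeff_single_of_ne (by positivity), add_zero]
  rw [hc] at h2
  simp at h2

/-- The unit `1 + T^(i*p+1)`. -/
def gm (i : ℕ) : G := Units.mk0 _ (em_ne p i)

lemma gm_sub_one (i : ℕ) :
    ((gm p i : G) : F) - 1 = HahnSeries.single ((i*p+1 : ℕ) : ℤ) (1 : ZMod p) := by
  rw [gm, Units.val_mk0, add_sub_cancel_left]

lemma gm_coeff_small (i : ℕ) : ∀ n : ℤ, n < ((i*p+1 : ℕ) : ℤ) →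
    (((gm p i : G) : F) - 1).coeff n = 0 := by
  intro n hn
  rw [gm_sub_one, HahnSeries.coeff_single_of_ne (by omega)]

lemma gm_mem_UU {N i : ℕ} (h : N + 1 ≤ i * p + 1) : gm p i ∈ UU p N := by
  rw [mem_UU_iff]
  exact (valuation_le_iff_coeff_lt_eq_zero (ZMod p) (D := (N : ℤ) + 1)).mpr
    (fun n hn => gm_coeff_small p i n (by omega))

lemma U_gm (i : ℕ) : U p (gm p i) = 1 + PowerSeries.X ^ (i*p+1) := by
  have hp : (0:ℕ) < p := (Fact.out : p.Prime).pos
  ext l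
  rw [U_coeff p (fun n hn => gm_coeff_small p i n (by omega)) l]
  rw [gm, Units.val_mk0, HahnSeries.coeff_add, HahnSeries.coeff_one, HahnSeries.coeff_single,
    map_add, PowerSeries.coeff_one, PowerSeries.coeff_X_pow]
  congr 1
  · split <;> simp_all
  · have : ((l:ℤ) = ((i*p+1:ℕ):ℤ)) ↔ (l = i*p+1) := by omega
    split <;> split <;> simp_all

lemma coeff_deriv_U_gm (i a : ℕ) :
    PowerSeries.coeff a (derivative (ZMod p) (U p (gm p i)))
      = if a = i*p then ((i*p+1 : ℕ) : ZMod p) else 0 := by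
  rw [U_gm, PowerSeries.coeff_derivative, map_add, PowerSeries.coeff_one,
    if_neg (by omega), PowerSeries.coeff_X_pow, zero_add]
  by_cases h : a = i*p
  · rw [if_pos (by omega), if_pos h]
    push_cast
    rw [one_mul, h]
    push_cast
    ring
  · rw [if_neg (by omega), if_neg h, zero_mul]

lemma constantCoeff_U_gm_inv (i : ℕ) :
    PowerSeries.coeff 0 (U p (gm p i)⁻¹) = 1 := by
  have := congrArg (PowerSeries.coeff 0) (U_mul_inv p (gm p i))
  rw [PowerSeries.coeff_zero_eq_constantCoeff, map_mul, map_one] at this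
  have h1 : PowerSeries.constantCoeff (U p (gm p i)) = 1 := by
    rw [U_gm]
    simp
  rw [h1, one_mul] at this
  rw [PowerSeries.coeff_zero_eq_constantCoeff]
  exact this

lemma coeff_DD_gm_lt {i j : ℕ} (hj : j < i) :
    PowerSeries.coeff (j*p) (DD p (gm p i)) = 0 := by
  have hp : (0:ℕ) < p := (Fact.out : p.Prime).pos
  rw [DD, PowerSeries.coeff_mul]
  apply Finset.sum_eq_zero
  intro ab hab
  rw [Finset.HasAntidiagonal.mem_antidiagonal] at hab
  rw [coeff_deriv_U_gm, if_neg (by nlinarith [Nat.zero_le ab.2]), zero_mul]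

lemma coeff_DD_gm_eq (i : ℕ) :
    PowerSeries.coeff (i*p) (DD p (gm p i)) = 1 := by
  rw [DD, PowerSeries.coeff_mul]
  rw [Finset.sum_eq_single_of_mem (i*p, 0) (by rw [Finset.HasAntidiagonal.mem_antidiagonal]; exact add_zero _)]
  · rw [coeff_deriv_U_gm, if_pos rfl, constantCoeff_U_gm_inv]
    push_cast
    rw [mul_one, ZMod.natCast_self, mul_zero, zero_add]
  · intro b hb hne
    rw [Finset.HasAntidiagonal.mem_antidiagonal] at hb
    rw [coeff_deriv_U_gm]
    rcases eq_or_ne b.1 (i*p) with h | h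
    · exfalso
      apply hne
      have : b.2 = 0 := by omega
      exact Prod.ext h this
    · rw [if_neg h, zero_mul]

end

end Stmt11Aux

/- ===== the representation ===== -/

namespace Stmt11Aux

noncomputable section

variable (p : ℕ) [Fact p.Prime] (k : Type) [Field k] [CharP k p]

local notation "F" => LaurentSeries (ZMod p)
local notation "G" => (LaurentSeries (ZMod p))ˣ

def phi (j : ℕ) (g : G) : k :=
  if j = 0 then 0 else ZMod.castHom (dvd_refl p) k (PowerSeries.coeff (j*p) (DD p g))

lemma phi_mul (j : ℕ) (g h : G) : phi p k j (g * h) = phi p k j g + phi p k j h := by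
  unfold phi
  split
  · simp
  · rw [DD_mul, map_add, map_add]

lemma phi_one (j : ℕ) : phi p k j 1 = 0 := by
  unfold phi
  split
  · rfl
  · rw [DD_one, map_zero, map_zero]

lemma phi_vanish {N j : ℕ} (hj : j * p + 1 ≤ N) {g : G} (hg : g ∈ UU p N) :
    phi p k j g = 0 := by
  unfold phi
  split
  · rfl
  · rw [coeff_DD_vanish p (fun n hn => UU_coeff p hg n (by exact_mod_cast hn)) hj, map_zero]

lemma phi_gm_lt {j i : ℕ} (hj : j < i) : phi p k j (gm p i) = 0 := by
  unfold phi
  split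
  · rfl
  · rw [coeff_DD_gm_lt p hj, map_zero]

lemma phi_gm_eq {i : ℕ} (hi : 1 ≤ i) : phi p k i (gm p i) = 1 := by
  unfold phi
  rw [if_neg (by omega), coeff_DD_gm_eq, map_one]

def BB (g : G) : (ℕ →₀ k) →ₗ[k] k :=
  Finsupp.lsum k fun j => phi p k j g • LinearMap.id

lemma BB_apply (g : G) (x : ℕ →₀ k) : BB p k g x = x.sum fun j c => phi p k j g * c := by
  rw [BB, Finsupp.lsum_apply]
  rfl

lemma BB_mul (g h : G) (x : ℕ →₀ k) : BB p k (g * h) x = BB p k g x + BB p k h x := by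
  rw [BB_apply, BB_apply, BB_apply, ← Finsupp.sum_add]
  apply Finsupp.sum_congr
  intro j _
  rw [phi_mul, add_mul]

lemma BB_one (x : ℕ →₀ k) : BB p k 1 x = 0 := by
  rw [BB_apply]
  simp [phi_one]

lemma BB_single0 (g : G) (c : k) : BB p k g (Finsupp.single 0 c) = 0 := by
  rw [BB_apply, Finsupp.sum_single_index (by rw [mul_zero])]
  rw [phi, if_pos rfl, zero_mul]

/-- The admissible smooth representation. -/
def rho : Representation k G (ℕ →₀ k) where
  toFun g := LinearMap.id + (Finsupp.lsingle 0).comp (BB p k g)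
  map_one' := by
    apply LinearMap.ext
    intro x
    simp [BB_one]
  map_mul' g h := by
    apply LinearMap.ext
    intro x
    simp only [LinearMap.add_apply, LinearMap.id_apply, LinearMap.coe_comp,
      Function.comp_apply, Finsupp.lsingle_apply, Module.End.mul_apply, map_add,
      BB_mul, BB_single0]
    simp [Finsupp.single_add, add_assoc]

lemma rho_apply (g : G) (x : ℕ →₀ k) :
    rho p k g x = x + Finsupp.single 0 (BB p k g x) := rfl

lemma rho_fixed_iff {g : G} {x : ℕ →₀ k} : rho p k g x = x ↔ BB p k g x = 0 := by
  rw [rho_apply, add_eq_left, Finsupp.single_eq_zero]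

/-- The stabilizer of a vector. -/
def stab (x : ℕ →₀ k) : Subgroup G where
  carrier := {g : G | BB p k g x = 0}
  one_mem' := BB_one p k x
  mul_mem' := by
    intro a b ha hb
    simp only [Set.mem_setOf_eq] at *
    rw [BB_mul, ha, hb, add_zero]
  inv_mem' := by
    intro a ha
    simp only [Set.mem_setOf_eq] at *
    have := BB_mul p k a⁻¹ a x
    rw [inv_mul_cancel, BB_one, ha, add_zero] at this
    exact this.symm

lemma UU_le_stab (x : ℕ →₀ k) : UU p (x.support.sup id * p + 1) ≤ stab p k x := by
  intro g hg
  show BB p k g x = 0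
  rw [BB_apply, Finsupp.sum]
  apply Finset.sum_eq_zero
  intro j hj
  have hle : j ≤ x.support.sup id := Finset.le_sup (f := id) hj
  rw [phi_vanish p k (by nlinarith [(Fact.out : p.Prime).pos]) hg, zero_mul]

lemma rho_smooth : IsSmoothRep (rho p k) := by
  intro x
  have : {g : G | rho p k g x = x} = ↑(stab p k x) := by
    ext g
    exact rho_fixed_iff p k
  rw [this]
  exact Subgroup.isOpen_mono (UU_le_stab p k x) (UU_isOpen p _)

lemma fixed_bound {N : ℕ} {x : ℕ →₀ k} (hx : ∀ g ∈ UU p N, rho p k g x = x) :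
    ∀ i : ℕ, N + 1 ≤ i → x i = 0 := by
  have hp : (0:ℕ) < p := (Fact.out : p.Prime).pos
  by_contra hc
  push_neg at hc
  obtain ⟨i, hNi, hxi⟩ := hc
  set s := x.support.filter (fun j => N + 1 ≤ j) with hs
  have hne : s.Nonempty := ⟨i, by
    rw [hs, Finset.mem_filter, Finsupp.mem_support_iff]
    exact ⟨hxi, hNi⟩⟩
  set i₀ := s.max' hne with hi₀
  have hi₀s : i₀ ∈ s := s.max'_mem hne
  have hi₀supp : i₀ ∈ x.support := (Finset.mem_filter.mp hi₀s).1
  have hi₀N : N + 1 ≤ i₀ := (Finset.mem_filter.mp hi₀s).2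
  have hmem : gm p i₀ ∈ UU p N := gm_mem_UU p (by nlinarith)
  have hfix := (rho_fixed_iff p k).mp (hx _ hmem)
  rw [BB_apply, Finsupp.sum] at hfix
  rw [Finset.sum_eq_single_of_mem i₀ hi₀supp] at hfix
  · rw [phi_gm_eq p k (by omega), one_mul] at hfix
    exact (Finsupp.mem_support_iff.mp hi₀supp) hfix
  · intro j hj hjne
    have hjlt : j < i₀ := by
      rcases lt_or_ge j (N+1) with h | h
      · omega
      · have : j ∈ s := by
          rw [hs, Finset.mem_filter]
          exact ⟨hj, h⟩
        have := s.le_max' j this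
        omega
    rw [phi_gm_lt p k hjlt, zero_mul]

lemma rho_admissible : IsAdmissibleRep (rho p k) := by
  classical
  refine ⟨rho_smooth p k, ?_⟩
  intro J hJ
  obtain ⟨N, hN⟩ := exists_UU_le p (hJ.mem_nhds J.one_mem)
  have hFD : FiniteDimensional k
      (Submodule.span k (↑((Finset.range (N+1)).image fun i => Finsupp.single i (1:k)) :
        Set (ℕ →₀ k))) :=
    FiniteDimensional.span_of_finite k (Finset.finite_toSet _)
  apply Submodule.finiteDimensional_of_le
    (S₂ := Submodule.span k (↑((Finset.range (N+1)).image fun i => Finsupp.single i (1:k)) :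
        Set (ℕ →₀ k)))
  intro x hx
  have hx' : ∀ g ∈ UU p N, rho p k g x = x := fun g hg => hx g (hN hg)
  have hv : ∀ i : ℕ, N + 1 ≤ i → x i = 0 := fixed_bound p k hx'
  rw [← Finsupp.sum_single x]
  apply Submodule.sum_mem
  intro j hj
  have hjN : j < N + 1 := by
    by_contra hc
    exact (Finsupp.mem_support_iff.mp hj) (hv j (by omega))
  have : Finsupp.single j (x j) = (x j) • Finsupp.single j (1:k) := by
    rw [Finsupp.smul_single', mul_one]
  rw [this]
  exact Submodule.smul_mem _ _ (Submodule.subset_span (by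
    rw [Finset.coe_image, Set.mem_image]
    exact ⟨j, by simpa using hjN, rfl⟩))

end

end Stmt11Aux

/-- for `F = 𝔽_p((T))` with its valuation topology and `G = Fˣ`, over an
algebraically closed field `k` of characteristic `p`, there is an admissible smooth
representation of `G` with a stable subspace such that the quotient representation is
not admissible. -/
theorem statement11 (p : ℕ) [Fact p.Prime]
    (k : Type) [Field k] [IsAlgClosed k] [CharP k p] :
    ∃ (V : Type) (_ : AddCommGroup V) (_ : Module k V)
      (ρ : Representation k (LaurentSeries (ZMod p))ˣ V),
      IsSmoothRep ρ ∧ IsAdmissibleRep ρ ∧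
        ∃ (W : Submodule k V) (h : IsStableRep ρ W),
          ¬ IsAdmissibleRep (quotRep ρ W h) := by
  classical
  refine ⟨ℕ →₀ k, inferInstance, inferInstance, Stmt11Aux.rho p k,
    Stmt11Aux.rho_smooth p k, Stmt11Aux.rho_admissible p k, ?_⟩
  set W : Submodule k (ℕ →₀ k) := Submodule.span k {Finsupp.single 0 (1:k)} with hW
  have hsingle_mem : ∀ c : k, Finsupp.single 0 c ∈ W := by
    intro c
    have : Finsupp.single 0 c = c • Finsupp.single 0 (1:k) := by
      rw [Finsupp.smul_single', mul_one]
    rw [this]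
    exact Submodule.smul_mem _ _ (Submodule.subset_span rfl)
  have hstable : IsStableRep (Stmt11Aux.rho p k) W := by
    intro g v hv
    obtain ⟨c, rfl⟩ := Submodule.mem_span_singleton.mp hv
    have : Stmt11Aux.rho p k g (c • Finsupp.single 0 (1:k)) = c • Finsupp.single 0 (1:k) := by
      rw [Stmt11Aux.rho_apply, map_smul, Stmt11Aux.BB_single0, smul_zero,
        Finsupp.single_zero, add_zero]
    rw [this]
    exact hv
  refine ⟨W, hstable, ?_⟩
  intro hadm
  obtain ⟨_, ha⟩ := hadm
  have htriv : ∀ (g : (LaurentSeries (ZMod p))ˣ) (y : (ℕ →₀ k) ⧸ W),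
      quotRep (Stmt11Aux.rho p k) W hstable g y = y := by
    intro g y
    obtain ⟨v, rfl⟩ := Submodule.Quotient.mk_surjective W y
    have h1 : quotRep (Stmt11Aux.rho p k) W hstable g (Submodule.Quotient.mk v)
        = Submodule.Quotient.mk (Stmt11Aux.rho p k g v) := by
      rfl
    rw [h1, Stmt11Aux.rho_apply, Submodule.Quotient.mk_add,
      (Submodule.Quotient.mk_eq_zero _).mpr (hsingle_mem _), add_zero]
  have htop := ha ⊤ (by rw [Subgroup.coe_top]; exact isOpen_univ)
  have heq : fixedBy (quotRep (Stmt11Aux.rho p k) W hstable)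
      ((⊤ : Subgroup (LaurentSeries (ZMod p))ˣ) : Set (LaurentSeries (ZMod p))ˣ) = ⊤ := by
    rw [Submodule.eq_top_iff']
    intro y g hg
    exact htriv g y
  rw [heq] at htop
  haveI := htop
  haveI : FiniteDimensional k ((ℕ →₀ k) ⧸ W) := Submodule.topEquiv.finiteDimensional
  set π : (ℕ →₀ k) →ₗ[k] (ℕ →₀ k) :=
    Finsupp.lcomapDomain (M := k) (R := k) Nat.succ Nat.succ_injective with hπ
  have hπ_apply : ∀ (x : ℕ →₀ k) (a : ℕ), π x a = x (a + 1) := by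
    intro x a
    rfl
  have hWker : W ≤ LinearMap.ker π := by
    rw [hW, Submodule.span_le]
    intro z hz
    rw [Set.mem_singleton_iff] at hz
    subst hz
    rw [SetLike.mem_coe, LinearMap.mem_ker]
    ext a
    rw [hπ_apply, Finsupp.single_eq_of_ne (by omega)]
    rfl
  have hsur : Function.Surjective π := by
    intro y
    refine ⟨Finsupp.mapDomain Nat.succ y, ?_⟩
    ext a
    rw [hπ_apply]
    exact Finsupp.mapDomain_apply Nat.succ_injective y a
  have hsurbar : Function.Surjective (W.liftQ π hWker) := by
    intro y
    obtain ⟨x, hx⟩ := hsur y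
    exact ⟨Submodule.Quotient.mk x, by rw [Submodule.liftQ_apply]; exact hx⟩
  haveI : FiniteDimensional k (ℕ →₀ k) := Module.Finite.of_surjective _ hsurbar
  haveI := FiniteDimensional.fintypeBasisIndex (Finsupp.basisSingleOne : Module.Basis ℕ k (ℕ →₀ k))
  exact not_finite ℕ
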